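/- Weak maximum principle for the 1-dimensional elliptic operator with nonlocal term: Let D ⊂ ℝ be open and bounded, u : ℝ → ℝ continuous on ℝ and C² on D, bounded above. Suppose for all x ∈ D, u''(x) + ∫ [u(x+z) - u(x) - z u'(x) 𝟙_{|z|<1}] ν(dz) ≥ 0, where ν is a Lévy measure on ℝ \ {0} with ∫ (1 ∧ z²) ν(dz) < ∞, and assume all integrals are finite. Then sup_{ℝ} u = sup_{ℝ \ D} u. -/

import Mathlib

open MeasureTheory Set

/-- Second derivative test: if `f` has a local max at `x₀`, is differentiable near `x₀`,
and `deriv f` is differentiable at `x₀` with derivative `d`, then `d ≤ 0`. -/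
lemma second_deriv_test_aux {f : ℝ → ℝ} {x₀ d : ℝ}
    (hf : ∀ᶠ x in nhds x₀, DifferentiableAt ℝ f x)
    (hd : HasDerivAt (deriv f) d x₀) (hmax : IsLocalMax f x₀) : d ≤ 0 := by
  by_contra hpos
  push_neg at hpos
  have h0 : deriv f x₀ = 0 := hmax.deriv_eq_zero
  have hslope : Filter.Tendsto (slope (deriv f) x₀) (nhdsWithin x₀ {x₀}ᶜ) (nhds d) :=
    hasDerivAt_iff_tendsto_slope.mp hd
  have hev : ∀ᶠ x in nhdsWithin x₀ {x₀}ᶜ, 0 < slope (deriv f) x₀ x :=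
    hslope.eventually (eventually_gt_nhds hpos)
  have hev2 : ∀ᶠ x in nhdsWithin x₀ (Set.Ioi x₀), 0 < slope (deriv f) x₀ x := by
    refine Filter.Eventually.filter_mono (nhdsWithin_mono x₀ ?_) hev
    intro x hx
    exact Set.mem_compl_singleton_iff.mpr (ne_of_gt hx)
  have hev3 : ∀ᶠ x in nhdsWithin x₀ (Set.Ioi x₀), 0 < deriv f x := by
    filter_upwards [hev2, self_mem_nhdsWithin] with x hx hx'
    have hxx : (0:ℝ) < x - x₀ := sub_pos.2 hx'
    rw [slope_def_field] at hx
    have h4 := mul_pos hx hxx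
    rw [div_mul_cancel₀ _ (ne_of_gt hxx)] at h4
    linarith [h4]
  rw [eventually_nhdsWithin_iff] at hev3
  have hmax' : ∀ᶠ x in nhds x₀, f x ≤ f x₀ := hmax
  obtain ⟨ε, hε, hball⟩ := Metric.eventually_nhds_iff.mp ((hf.and hmax').and hev3)
  set b := x₀ + ε/2 with hb
  have hcont : ContinuousOn f (Set.Icc x₀ b) := by
    intro x hx
    have hdist : dist x x₀ < ε := by
      rw [Real.dist_eq, abs_lt]
      constructor
      · linarith [hx.1]
      · have := hx.2; rw [hb] at this; linarith
    exact ((hball hdist).1.1).continuousAt.continuousWithinAt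
  have hderiv : ∀ x ∈ interior (Set.Icc x₀ b), 0 < deriv f x := by
    rw [interior_Icc]
    intro x hx
    have hdist : dist x x₀ < ε := by
      rw [Real.dist_eq, abs_lt]
      constructor
      · linarith [hx.1]
      · have := hx.2; rw [hb] at this; linarith
    exact (hball hdist).2 hx.1
  have hmono := strictMonoOn_of_deriv_pos (convex_Icc x₀ b) hcont hderiv
  have h1 : f x₀ < f b :=
    hmono (Set.left_mem_Icc.2 (by rw [hb]; linarith)) (Set.right_mem_Icc.2 (by rw [hb]; linarith))
      (by rw [hb]; linarith)
  have h2 : f b ≤ f x₀ := by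
    have hdist : dist b x₀ < ε := by
      rw [Real.dist_eq, hb, show x₀ + ε/2 - x₀ = ε/2 by ring, abs_of_pos (by linarith)]
      linarith
    exact (hball hdist).1.2
  linarith

/-- Weak maximum principle for the 1-dimensional elliptic operator with a
nonlocal Lévy-type term: if `u'' + ∫ [u(x+z) - u(x) - z u'(x) 1_{|z|<1}] ν(dz) ≥ 0`
on an open bounded set `D`, then `sup_ℝ u = sup_{ℝ \ D} u`. -/
theorem stmt_6 (D : Set ℝ) (hD : IsOpen D) (hDb : Bornology.IsBounded D)
    (u : ℝ → ℝ) (hu : Continuous u) (hub : BddAbove (Set.range u))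
    (hC2 : ContDiffOn ℝ 2 u D)
    (ν : Measure ℝ) (hν0 : ν {0} = 0)
    (hLevy : ∫⁻ z, ENNReal.ofReal (min 1 (z ^ 2)) ∂ν < ⊤)
    (hint : ∀ x ∈ D, Integrable (fun z =>
      u (x + z) - u x - indicator {w : ℝ | |w| < 1} (fun w => w * deriv u x) z) ν)
    (hL : ∀ x ∈ D, 0 ≤ deriv (deriv u) x
      + ∫ z, (u (x + z) - u x
          - indicator {w : ℝ | |w| < 1} (fun w => w * deriv u x) z) ∂ν) :
    sSup (Set.range u) = sSup (u '' Dᶜ) := by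
  -- a bounding interval for D
  obtain ⟨r, hr⟩ := hDb.subset_ball 0
  set R : ℝ := max r 0 with hR
  have hR0 : 0 ≤ R := le_max_right r 0
  have hDR : ∀ x ∈ D, |x| < R + 1 := by
    intro x hx
    have h1 := hr hx
    rw [Metric.mem_ball, Real.dist_eq, sub_zero] at h1
    have : r ≤ R := le_max_left r 0
    linarith
  set T : ℝ := R + 2 with hT
  have hTD : T ∉ D := by
    intro h
    have h2 := hDR T h
    rw [abs_of_pos (by rw [hT]; linarith)] at h2
    rw [hT] at h2; linarith
  -- measure of the far field
  set S : Set ℝ := {z : ℝ | 1 ≤ |z|} with hS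
  have hSm : MeasurableSet S := measurableSet_le measurable_const continuous_abs.measurable
  have hSfin : ν S < ⊤ := by
    have h1 : ν S = ∫⁻ z in S, ENNReal.ofReal (min 1 (z ^ 2)) ∂ν := by
      rw [← setLIntegral_one]
      refine setLIntegral_congr_fun hSm (fun z hz => ?_)
      have hz1 : (1:ℝ) ≤ |z| := hz
      have hz2 : (1:ℝ) ≤ z ^ 2 := by nlinarith [sq_abs z]
      rw [min_eq_left hz2, ENNReal.ofReal_one]
    rw [h1]
    exact lt_of_le_of_lt (setLIntegral_le_lintegral _ _) hLevy
  set K : ℝ := (ν S).toReal with hK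
  have hK0 : 0 ≤ K := ENNReal.toReal_nonneg
  set l : ℝ := Real.sqrt (K + 1) with hl
  have hl2 : l ^ 2 = K + 1 := Real.sq_sqrt (by linarith)
  have hl0 : 0 ≤ l := Real.sqrt_nonneg _
  -- the barrier function
  set E : ℝ → ℝ := fun y => Real.exp (l * y) with hE
  have hEd : ∀ y : ℝ, HasDerivAt E (l * E y) y := by
    intro y
    have h1 : HasDerivAt (fun x : ℝ => l * x) (l * 1) y := (hasDerivAt_id y).const_mul l
    simpa [hE, mul_comm] using h1.exp
  set w : ℝ → ℝ := fun x => Real.exp (l * min x T) with hw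
  have hwc : Continuous w :=
    Real.continuous_exp.comp (continuous_const.mul (continuous_id.min continuous_const))
  have hwpos : ∀ x, 0 < w x := fun x => Real.exp_pos _
  have hwle : ∀ x, w x ≤ Real.exp (l * T) := fun x =>
    Real.exp_le_exp.2 (mul_le_mul_of_nonneg_left (min_le_right _ _) hl0)
  have hweq : ∀ x ≤ T, w x = E x := by
    intro x hx
    rw [hw, hE]
    simp [min_eq_left hx]
  set A : ℝ := sSup (u '' Dᶜ) with hA
  have hAbdd : BddAbove (u '' Dᶜ) := hub.mono (Set.image_subset_range u Dᶜ)
  -- key claim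
  have key : ∀ ε : ℝ, 0 < ε → ∀ x : ℝ, u x ≤ A + ε * Real.exp (l * T) := by
    intro ε hε x
    set v : ℝ → ℝ := fun y => u y + ε * w y with hv
    have hvc : Continuous v := hu.add (continuous_const.mul hwc)
    have hvbd : ∀ y, v y ≤ sSup (Set.range u) + ε * Real.exp (l * T) := fun y =>
      add_le_add (le_csSup hub ⟨y, rfl⟩) (mul_le_mul_of_nonneg_left (hwle y) hε.le)
    have hvBdd : BddAbove (v '' Dᶜ) := ⟨_, fun b hb => by
      obtain ⟨y, _, rfl⟩ := hb; exact hvbd y⟩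
    set B : ℝ := sSup (v '' Dᶜ) with hB
    have hclos : ∀ y ∈ closure D, v y ≤ B := by
      by_contra hcon
      push_neg at hcon
      obtain ⟨x₁, hx₁c, hx₁⟩ := hcon
      have hcpt : IsCompact (closure D) := hDb.isCompact_closure
      obtain ⟨x₀, hx₀c, hx₀max⟩ := hcpt.exists_isMaxOn ⟨x₁, hx₁c⟩ hvc.continuousOn
      have hx₀max' : ∀ y ∈ closure D, v y ≤ v x₀ := fun y hy => hx₀max hy
      have hBlt : B < v x₀ := lt_of_lt_of_le hx₁ (hx₀max' x₁ hx₁c)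
      have hglob : ∀ y, v y ≤ v x₀ := by
        intro y
        by_cases hy : y ∈ D
        · exact hx₀max' y (subset_closure hy)
        · exact (le_csSup hvBdd ⟨y, hy, rfl⟩).trans hBlt.le
      have hx₀D : x₀ ∈ D := by
        by_contra hnot
        exact absurd (le_csSup hvBdd ⟨x₀, hnot, rfl⟩) (not_le.2 hBlt)
      have hx₀R : x₀ < R + 1 := (abs_lt.1 (hDR x₀ hx₀D)).2
      have hopen : IsOpen (D ∩ Set.Iio T) := hD.inter isOpen_Iio
      have hx₀mem : x₀ ∈ D ∩ Set.Iio T := ⟨hx₀D, by rw [Set.mem_Iio, hT]; linarith⟩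
      have hnhds : D ∩ Set.Iio T ∈ nhds x₀ := hopen.mem_nhds hx₀mem
      have hudiff : ∀ y ∈ D, DifferentiableAt ℝ u y := fun y hy =>
        (hC2.contDiffAt (hD.mem_nhds hy)).differentiableAt (by norm_num)
      have hdu1 : ContDiffOn ℝ 1 (deriv u) D := hC2.deriv_of_isOpen hD (by norm_num)
      have hdudiff : DifferentiableAt ℝ (deriv u) x₀ :=
        (hdu1.contDiffAt (hD.mem_nhds hx₀D)).differentiableAt (by norm_num)
      have hveq : Set.EqOn v (fun y => u y + ε * E y) (D ∩ Set.Iio T) := by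
        intro y hy
        simp only [hv]
        rw [hweq y (le_of_lt hy.2)]
      have hvdiff : ∀ y ∈ D ∩ Set.Iio T, HasDerivAt v (deriv u y + ε * (l * E y)) y := by
        intro y hy
        have h1 : HasDerivAt (fun x => u x + ε * E x) (deriv u y + ε * (l * E y)) y :=
          ((hudiff y hy.1).hasDerivAt).add ((hEd y).const_mul ε)
        exact h1.congr_of_eventuallyEq (Filter.eventuallyEq_of_mem (hopen.mem_nhds hy) hveq)
      have hvderiv : Set.EqOn (deriv v) (fun y => deriv u y + ε * (l * E y)) (D ∩ Set.Iio T) :=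
        fun y hy => (hvdiff y hy).deriv
      have hmaxloc : IsLocalMax v x₀ := Filter.Eventually.of_forall hglob
      have hvz : deriv u x₀ + ε * (l * E x₀) = 0 :=
        hmaxloc.hasDerivAt_eq_zero (hvdiff x₀ hx₀mem)
      have h2 : HasDerivAt (fun y => deriv u y + ε * (l * E y))
          (deriv (deriv u) x₀ + ε * (l * (l * E x₀))) x₀ :=
        (hdudiff.hasDerivAt).add (((hEd x₀).const_mul l).const_mul ε)
      have h2v : HasDerivAt (deriv v) (deriv (deriv u) x₀ + ε * (l * (l * E x₀))) x₀ :=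
        h2.congr_of_eventuallyEq (Filter.eventuallyEq_of_mem hnhds hvderiv)
      have hvdiffev : ∀ᶠ y in nhds x₀, DifferentiableAt ℝ v y := by
        filter_upwards [hnhds] with y hy
        exact (hvdiff y hy).differentiableAt
      have hd2 : deriv (deriv u) x₀ + ε * (l * (l * E x₀)) ≤ 0 :=
        second_deriv_test_aux hvdiffev h2v hmaxloc
      have hEpos : 0 < E x₀ := Real.exp_pos _
      have hwx₀ : w x₀ = E x₀ := hweq x₀ (le_of_lt hx₀mem.2)
      -- pointwise bound on the integrand
      have hptwise : ∀ z, u (x₀ + z) - u x₀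
          - Set.indicator {w : ℝ | |w| < 1} (fun w => w * deriv u x₀) z
          ≤ Set.indicator S (fun _ => ε * E x₀) z := by
        intro z
        have hg := hglob (x₀ + z)
        simp only [hv] at hg
        by_cases hz : |z| < 1
        · rw [Set.indicator_of_mem (show z ∈ {w : ℝ | |w| < 1} from hz),
            Set.indicator_of_notMem (show z ∉ S by simp only [hS, Set.mem_setOf_eq]; linarith)]
          have hzT : x₀ + z ≤ T := by
            have := (abs_lt.1 hz).2
            rw [hT]; linarith
          have hwz : w (x₀ + z) = E x₀ * Real.exp (l * z) := by
            rw [hweq _ hzT, hE, ← Real.exp_add]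
            ring_nf
          have hvineq : u (x₀ + z) - u x₀ ≤ ε * w x₀ - ε * w (x₀ + z) := by linarith
          rw [hwx₀, hwz] at hvineq
          have hderiv : deriv u x₀ = -(ε * (l * E x₀)) := by linarith
          rw [hderiv]
          have hexp : l * z + 1 ≤ Real.exp (l * z) := Real.add_one_le_exp (l * z)
          nlinarith [mul_pos hε hEpos]
        · rw [Set.indicator_of_notMem (show z ∉ {w : ℝ | |w| < 1} from hz),
            Set.indicator_of_mem (show z ∈ S from not_lt.1 hz)]
          have hvineq : u (x₀ + z) - u x₀ ≤ ε * w x₀ - ε * w (x₀ + z) := by linarith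
          rw [hwx₀] at hvineq
          nlinarith [mul_pos hε (hwpos (x₀ + z))]
      have hgInt : Integrable (Set.indicator S fun _ => ε * E x₀) ν := by
        rw [integrable_indicator_iff hSm]
        exact integrableOn_const hSfin.ne
      have hIleq : (∫ z, (u (x₀ + z) - u x₀
          - Set.indicator {w : ℝ | |w| < 1} (fun w => w * deriv u x₀) z) ∂ν)
          ≤ ε * E x₀ * K := by
        calc (∫ z, (u (x₀ + z) - u x₀
            - Set.indicator {w : ℝ | |w| < 1} (fun w => w * deriv u x₀) z) ∂ν)
            ≤ ∫ z, Set.indicator S (fun _ => ε * E x₀) z ∂ν :=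
              integral_mono (hint x₀ hx₀D) hgInt hptwise
          _ = (ν S).toReal • (ε * E x₀) := integral_indicator_const _ hSm
          _ = ε * E x₀ * K := by rw [smul_eq_mul, hK]; ring
      have hfinal := hL x₀ hx₀D
      have hll : ε * (l * (l * E x₀)) = ε * E x₀ * K + ε * E x₀ := by
        have h3 : ε * (l * (l * E x₀)) = ε * E x₀ * l ^ 2 := by ring
        rw [h3, hl2]; ring
      linarith [mul_pos hε hEpos]
    -- from the closure bound to the conclusion
    have hBle : B ≤ A + ε * Real.exp (l * T) := by
      refine csSup_le ⟨v T, ⟨T, hTD, rfl⟩⟩ ?_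
      rintro b ⟨y, hy, rfl⟩
      exact add_le_add (le_csSup hAbdd ⟨y, hy, rfl⟩)
        (mul_le_mul_of_nonneg_left (hwle y) hε.le)
    by_cases hx : x ∈ D
    · have h1 : u x ≤ v x := le_add_of_nonneg_right (mul_nonneg hε.le (hwpos x).le)
      exact h1.trans ((hclos x (subset_closure hx)).trans hBle)
    · exact (le_csSup hAbdd ⟨x, hx, rfl⟩).trans
        (le_add_of_nonneg_right (mul_nonneg hε.le (Real.exp_pos _).le))
  -- conclude
  have hle : sSup (Set.range u) ≤ A := by
    refine le_of_forall_pos_le_add fun η hη => ?_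
    have hexp : 0 < Real.exp (l * T) := Real.exp_pos _
    refine csSup_le (Set.range_nonempty u) ?_
    rintro b ⟨x, rfl⟩
    calc u x ≤ A + η / Real.exp (l * T) * Real.exp (l * T) :=
          key (η / Real.exp (l * T)) (div_pos hη hexp) x
      _ = A + η := by rw [div_mul_cancel₀ _ (ne_of_gt hexp)]
  have hge : A ≤ sSup (Set.range u) :=
    csSup_le_csSup hub ⟨u T, ⟨T, hTD, rfl⟩⟩ (Set.image_subset_range u Dᶜ)
  exact le_antisymm hle hge
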